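/- Let p be a pmf on S × T with first marginal pX, second marginal pY, and joint entropy H(X,Y). Then H(X,Y) ≤ H(X) + H(Y), where H(X) and H(Y) are the entropies of the marginals pX and pY. -/

import Mathlib

/-- Entropy of the joint distribution `p` on `S × T` (natural log). -/
noncomputable def pairEntropy {S T : Type*} [Fintype S] [Fintype T]
    (p : S × T → ℝ) : ℝ :=
  ∑ z : S × T, Real.negMulLog (p z)

/-- First marginal `pX x = ∑ y, p (x, y)`. -/
noncomputable def fstMarginal {S T : Type*} [Fintype T] (p : S × T → ℝ) (x : S) : ℝ :=
  ∑ y, p (x, y)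

/-- Second marginal `pY y = ∑ x, p (x, y)`. -/
noncomputable def sndMarginal {S T : Type*} [Fintype S] (p : S × T → ℝ) (y : T) : ℝ :=
  ∑ x, p (x, y)

/-- Entropy `H(X)` of the first marginal. -/
noncomputable def fstEntropy {S T : Type*} [Fintype S] [Fintype T] (p : S × T → ℝ) : ℝ :=
  ∑ x, Real.negMulLog (fstMarginal p x)

/-- Entropy `H(Y)` of the second marginal. -/
noncomputable def sndEntropy {S T : Type*} [Fintype S] [Fintype T] (p : S × T → ℝ) : ℝ :=
  ∑ y, Real.negMulLog (sndMarginal p y)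

/-- Conditional entropy `H(Y | X) = ∑_{x : pX x ≠ 0} pX x * H(y ↦ p (x,y) / pX x)`. -/
noncomputable def condEntropySndGivenFst {S T : Type*} [Fintype S] [Fintype T]
    (p : S × T → ℝ) : ℝ :=
  ∑ x, if fstMarginal p x = 0 then 0
    else fstMarginal p x * ∑ y, Real.negMulLog (p (x, y) / fstMarginal p x)

/-- Subadditivity of entropy: `H(X,Y) ≤ H(X) + H(Y)`. -/
theorem pairEntropy_le_add_marginal_entropies
    {S T : Type*} [Fintype S] [Fintype T] [Nonempty S] [Nonempty T]
    (p : S × T → ℝ) (hp0 : ∀ z, 0 ≤ p z) (hp1 : ∑ z, p z = 1) :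
    pairEntropy p ≤ fstEntropy p + sndEntropy p := by
  classical
  set q : S × T → ℝ := fun z => fstMarginal p z.1 * sndMarginal p z.2 with hq
  have hpX0 : ∀ x, 0 ≤ fstMarginal p x := fun x => Finset.sum_nonneg fun y _ => hp0 _
  have hpY0 : ∀ y, 0 ≤ sndMarginal p y := fun y => Finset.sum_nonneg fun x _ => hp0 _
  have hle_pX : ∀ z : S × T, p z ≤ fstMarginal p z.1 := by
    intro z
    have := Finset.single_le_sum (f := fun y => p (z.1, y)) (fun y _ => hp0 _)
      (Finset.mem_univ z.2)
    simpa [fstMarginal] using this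
  have hle_pY : ∀ z : S × T, p z ≤ sndMarginal p z.2 := by
    intro z
    have := Finset.single_le_sum (f := fun x => p (x, z.2)) (fun x _ => hp0 _)
      (Finset.mem_univ z.1)
    simpa [sndMarginal] using this
  have hX : fstEntropy p = ∑ z : S × T, -(p z * Real.log (fstMarginal p z.1)) := by
    unfold fstEntropy
    rw [Fintype.sum_prod_type]
    refine Finset.sum_congr rfl fun x _ => ?_
    simp only [Real.negMulLog, fstMarginal, neg_mul, ← Finset.sum_neg_distrib,
      Finset.sum_mul]
  have hY : sndEntropy p = ∑ z : S × T, -(p z * Real.log (sndMarginal p z.2)) := by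
    unfold sndEntropy
    rw [Fintype.sum_prod_type_right]
    refine Finset.sum_congr rfl fun y _ => ?_
    simp only [Real.negMulLog, sndMarginal, neg_mul, ← Finset.sum_neg_distrib,
      Finset.sum_mul]
  have hsumX : ∑ x, fstMarginal p x = 1 := by
    rw [← hp1, Fintype.sum_prod_type]; rfl
  have hsumY : ∑ y, sndMarginal p y = 1 := by
    rw [← hp1, Fintype.sum_prod_type_right]; rfl
  have hsumq : ∑ z : S × T, q z = 1 := by
    rw [Fintype.sum_prod_type]
    simp only [hq]
    rw [← Finset.sum_mul_sum, hsumX, hsumY, one_mul]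
  -- key termwise inequality
  have key : ∀ z : S × T,
      Real.negMulLog (p z) + p z * Real.log (fstMarginal p z.1)
        + p z * Real.log (sndMarginal p z.2) ≤ q z - p z := by
    intro z
    rcases eq_or_lt_of_le (hp0 z) with h0 | hpos
    · rw [← h0]
      simp only [Real.negMulLog_zero, zero_mul, add_zero, sub_zero, zero_add]
      exact mul_nonneg (hpX0 _) (hpY0 _)
    · have hpXpos : 0 < fstMarginal p z.1 := lt_of_lt_of_le hpos (hle_pX z)
      have hpYpos : 0 < sndMarginal p z.2 := lt_of_lt_of_le hpos (hle_pY z)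
      have hqpos : 0 < q z := mul_pos hpXpos hpYpos
      have hlog : Real.log (q z / p z) ≤ q z / p z - 1 :=
        Real.log_le_sub_one_of_pos (div_pos hqpos hpos)
      have h2 : p z * Real.log (q z / p z) ≤ q z - p z := by
        have := mul_le_mul_of_nonneg_left hlog (le_of_lt hpos)
        calc p z * Real.log (q z / p z) ≤ p z * (q z / p z - 1) := this
          _ = q z - p z := by field_simp
      calc Real.negMulLog (p z) + p z * Real.log (fstMarginal p z.1)
            + p z * Real.log (sndMarginal p z.2)
          = p z * Real.log (q z / p z) := by
            rw [Real.negMulLog, Real.log_div (ne_of_gt hqpos) (ne_of_gt hpos),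
              hq, Real.log_mul (ne_of_gt hpXpos) (ne_of_gt hpYpos)]
            ring
        _ ≤ q z - p z := h2
  have hsum : ∑ z : S × T, (Real.negMulLog (p z) + p z * Real.log (fstMarginal p z.1)
      + p z * Real.log (sndMarginal p z.2)) ≤ ∑ z : S × T, (q z - p z) :=
    Finset.sum_le_sum fun z _ => key z
  rw [Finset.sum_sub_distrib, hsumq, hp1, sub_self] at hsum
  rw [pairEntropy, hX, hY]
  rw [Finset.sum_add_distrib, Finset.sum_add_distrib] at hsum
  simp only [Finset.sum_neg_distrib]
  linarith
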